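/- In the Pedersen–Petersen C*-algebra 𝔓₁, the element P₁ − Q₁ is a self-adjoint commutator but not a *-commutator: there exist X, Y ∈ 𝔓₁ with XY − YX = P₁ − Q₁, while there is no a ∈ 𝔓₁ with a a* − a* a = P₁ − Q₁. In particular 𝔠*(𝔓₁) is a proper subset of 𝔠(𝔓₁)_sa. -/

import Mathlib

/-!
The Pedersen–Petersen C*-algebra `𝔓_n` is realised as the subset (sub-C*-algebra)
`ppSet n` of `C(S^{2n+1}, M₂)` consisting of the continuous functions `F` with
`F(λe) = diag(1,λ)·F(e)·diag(1,λ̄)` for every unit scalar `λ`; this is the algebra of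
continuous sections of the Pedersen–Petersen bundle `B_n` over `ℂP^n`.
Here `M₂` carries the (L²-)operator norm, and `C(S^{2n+1}, M₂)` the sup norm.
-/

open scoped Matrix.Norms.L2Operator

noncomputable section

/-- The sphere `S^{2n+1}`: unit vectors of `ℂ^{n+1}`. -/
abbrev PPSphere (n : ℕ) := Metric.sphere (0 : EuclideanSpace ℂ (Fin (n + 1))) 1

/-- 2×2 complex matrices. -/
abbrev M₂ := Matrix (Fin 2) (Fin 2) ℂ

/-- Scalar multiplication of a point of the sphere by a modulus-one complex number. -/
def circleSMul {n : ℕ} (l : ℂ) (hl : ‖l‖ = 1) (e : PPSphere n) : PPSphere n :=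
  ⟨l • (e : EuclideanSpace ℂ (Fin (n + 1))), by
    have he : ‖(e : EuclideanSpace ℂ (Fin (n + 1)))‖ = 1 := by
      simpa using mem_sphere_zero_iff_norm.mp e.2
    simp [mem_sphere_zero_iff_norm, norm_smul, hl, he]⟩

/-- The diagonal matrix `diag(1, l)`. -/
def ppDiag (l : ℂ) : M₂ := Matrix.diagonal ![1, l]

/-- The Pedersen–Petersen C*-algebra `𝔓_n`, as the subset of `C(S^{2n+1}, M₂)` of
functions satisfying the equivariance condition `F(λe) = diag(1,λ)·F(e)·diag(1,λ̄)`. -/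
def ppSet (n : ℕ) : Set C(PPSphere n, M₂) :=
  {F | ∀ (e : PPSphere n) (l : ℂ) (hl : ‖l‖ = 1),
    F (circleSMul l hl e) = ppDiag l * F e * ppDiag (starRingEnd ℂ l)}

/-- The constant function `P_n = diag(1,0) ∈ 𝔓_n`. -/
def ppP (n : ℕ) : C(PPSphere n, M₂) := ContinuousMap.const _ (Matrix.diagonal ![1, 0])

/-- The constant function `Q_n = diag(0,1) ∈ 𝔓_n`. -/
def ppQ (n : ℕ) : C(PPSphere n, M₂) := ContinuousMap.const _ (Matrix.diagonal ![0, 1])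

open Complex in
private lemma slit_of_close {u v : ℂ} (hv : v ≠ 0) (h : ‖u - v‖ < ‖v‖) :
    u / v ∈ Complex.slitPlane := by
  have h1 : ‖u / v - 1‖ < 1 := by
    rw [show u / v - 1 = (u - v) / v by field_simp, norm_div,
      div_lt_one (norm_pos_iff.mpr hv)]
    exact h
  simpa using Complex.mem_slitPlane_of_norm_lt_one h1

private lemma prod_div_telescope (F : ℕ → ℂ) (hF : ∀ k, F k ≠ 0) :
    ∀ n : ℕ, ∏ k ∈ Finset.range n, F (k + 1) / F k = F n / F 0
  | 0 => by simp [div_self (hF 0)]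
  | (n+1) => by
      rw [Finset.prod_range_succ, prod_div_telescope F hF n, div_mul_div_comm,
        mul_comm (F n), mul_div_mul_right _ _ (hF n)]
open Complex Real in
private lemma pp_sphere_mem (t s : ℝ) :
    (!₂[Complex.exp (((2 * π * t : ℝ) : ℂ) * I) * ((Real.cos (π / 2 * s) : ℝ) : ℂ),
      ((Real.sin (π / 2 * s) : ℝ) : ℂ)] : EuclideanSpace ℂ (Fin 2)) ∈
      Metric.sphere (0 : EuclideanSpace ℂ (Fin 2)) 1 := by
  apply mem_sphere_zero_iff_norm.mpr
  rw [EuclideanSpace.norm_eq, Fin.sum_univ_two]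
  simp only [PiLp.toLp_apply, Matrix.cons_val_zero, Matrix.cons_val_one, Matrix.head_cons, norm_mul,
    Complex.norm_exp_ofReal_mul_I, Complex.norm_real, Real.norm_eq_abs, one_mul]
  rw [_root_.sq_abs, _root_.sq_abs, Real.cos_sq_add_sin_sq, Real.sqrt_one]

open Complex Real in
private lemma pp_no_equivariant (g : PPSphere 1 → ℂ) (hgc : Continuous g)
    (h0 : ∀ e, g e ≠ 0)
    (heq : ∀ (e : PPSphere 1) (l : ℂ) (hl : ‖l‖ = 1),
      g (circleSMul l hl e) = (starRingEnd ℂ l) * g e) : False := by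
  classical
  -- the filling homotopy of the basic circle
  set H : ℝ × ℝ → PPSphere 1 := fun p =>
    ⟨!₂[Complex.exp (((2 * π * p.1 : ℝ) : ℂ) * I) * ((Real.cos (π / 2 * p.2) : ℝ) : ℂ),
      ((Real.sin (π / 2 * p.2) : ℝ) : ℂ)], pp_sphere_mem p.1 p.2⟩ with hHdef
  have hHc : Continuous H := by
    apply Continuous.subtype_mk
    apply (PiLp.continuous_toLp 2 _).comp
    apply continuous_pi
    intro i
    fin_cases i
    · show Continuous fun p : ℝ × ℝ =>
        Complex.exp (((2 * π * p.1 : ℝ) : ℂ) * I) * ((Real.cos (π / 2 * p.2) : ℝ) : ℂ)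
      fun_prop
    · show Continuous fun p : ℝ × ℝ => ((Real.sin (π / 2 * p.2) : ℝ) : ℂ)
      fun_prop
  set G : ℝ × ℝ → ℂ := fun p => g (H p) with hGdef
  have hGc : Continuous G := hgc.comp hHc
  have hG0 : ∀ p, G p ≠ 0 := fun p => h0 _
  -- side identification
  have hside : ∀ s : ℝ, G (1, s) = G (0, s) := by
    intro s
    have : H (1, s) = H (0, s) := by
      apply Subtype.ext
      show (!₂[_, _] : EuclideanSpace ℂ (Fin 2)) = !₂[_, _]
      have h1 : Complex.exp (((2 * π * (1:ℝ) : ℝ) : ℂ) * I) = 1 := by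
        push_cast
        rw [mul_one]
        exact Complex.exp_two_pi_mul_I
      have h2 : Complex.exp (((2 * π * (0:ℝ) : ℝ) : ℂ) * I) = 1 := by
        push_cast
        simp
      rw [h1, h2]
    rw [hGdef]
    simp only []
    rw [this]
  -- top is constant
  have hnp : (!₂[0, 1] : EuclideanSpace ℂ (Fin 2)) ∈
      Metric.sphere (0 : EuclideanSpace ℂ (Fin 2)) 1 := by
    apply mem_sphere_zero_iff_norm.mpr
    rw [EuclideanSpace.norm_eq, Fin.sum_univ_two]
    simp
  set np : PPSphere 1 := ⟨!₂[0, 1], hnp⟩ with hnpdef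
  have htop : ∀ t : ℝ, G (t, 1) = g np := by
    intro t
    have : H (t, 1) = np := by
      apply Subtype.ext
      show (!₂[_, _] : EuclideanSpace ℂ (Fin 2)) = !₂[0, 1]
      rw [show π / 2 * (1:ℝ) = π / 2 by ring]
      rw [Real.cos_pi_div_two, Real.sin_pi_div_two]
      simp
    show g (H (t, 1)) = g np
    rw [this]
  -- base point
  have he₀ : (!₂[1, 0] : EuclideanSpace ℂ (Fin 2)) ∈
      Metric.sphere (0 : EuclideanSpace ℂ (Fin 2)) 1 := by
    apply mem_sphere_zero_iff_norm.mpr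
    rw [EuclideanSpace.norm_eq, Fin.sum_univ_two]
    simp
  set e₀ : PPSphere 1 := ⟨!₂[1, 0], he₀⟩ with he₀def
  have hlnorm : ∀ t : ℝ, ‖Complex.exp (((2 * π * t : ℝ) : ℂ) * I)‖ = 1 := by
    intro t
    exact Complex.norm_exp_ofReal_mul_I _
  have hbase : ∀ t : ℝ,
      G (t, 0) = (starRingEnd ℂ) (Complex.exp (((2 * π * t : ℝ) : ℂ) * I)) * g e₀ := by
    intro t
    have : H (t, 0) = circleSMul _ (hlnorm t) e₀ := by
      apply Subtype.ext
      show (!₂[_, _] : EuclideanSpace ℂ (Fin 2)) =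
        Complex.exp (((2 * π * t : ℝ) : ℂ) * I) • (!₂[1, 0] : EuclideanSpace ℂ (Fin 2))
      ext i
      fin_cases i <;>
        simp [PiLp.smul_apply, smul_eq_mul]
    show g (H (t, 0)) = _
    rw [this, heq e₀ _ (hlnorm t)]
  -- compactness: minimum modulus and uniform continuity
  have hKcomp : IsCompact ((Set.Icc (0:ℝ) 1) ×ˢ (Set.Icc (0:ℝ) 1)) :=
    isCompact_Icc.prod isCompact_Icc
  obtain ⟨p₀, hp₀K, hp₀min⟩ := hKcomp.exists_isMinOn
    ⟨(0,0), by constructor <;> simp⟩ (hGc.norm.continuousOn)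
  have hp₀ : ∀ p ∈ (Set.Icc (0:ℝ) 1) ×ˢ (Set.Icc (0:ℝ) 1), ‖G p₀‖ ≤ ‖G p‖ :=
    fun p hp => hp₀min hp
  set ε : ℝ := ‖G p₀‖ with hεdef
  have hε : 0 < ε := norm_pos_iff.mpr (hG0 p₀)
  obtain ⟨δ, hδ, hδ'⟩ := Metric.uniformContinuousOn_iff.mp
    (hKcomp.uniformContinuousOn_of_continuous hGc.continuousOn) ε hε
  obtain ⟨n, hn⟩ := exists_nat_gt (max 3 δ⁻¹)
  have hn3 : (3:ℝ) ≤ (n:ℝ) := le_of_lt (lt_of_le_of_lt (le_max_left _ _) hn)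
  have hn0 : (0:ℝ) < (n:ℝ) := by linarith
  have hnne : (n:ℝ) ≠ 0 := ne_of_gt hn0
  have hδn : (1:ℝ)/(n:ℝ) < δ := by
    rw [div_lt_iff₀ hn0]
    calc (1:ℝ) = δ * δ⁻¹ := (mul_inv_cancel₀ (ne_of_gt hδ)).symm
    _ < δ * n := mul_lt_mul_of_pos_left (lt_of_le_of_lt (le_max_right _ _) hn) hδ
  have hmemK : ∀ x : ℝ, 0 ≤ x → x ≤ (n:ℝ) → ∀ s ∈ Set.Icc (0:ℝ) 1,
      (x/(n:ℝ), s) ∈ (Set.Icc (0:ℝ) 1) ×ˢ (Set.Icc (0:ℝ) 1) := by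
    intro x hx0 hxn s hs
    exact ⟨⟨by positivity, by rw [div_le_one hn0]; exact hxn⟩, hs⟩
  have hclose : ∀ (k : ℕ), k < n → ∀ s ∈ Set.Icc (0:ℝ) 1,
      ‖G (((k:ℝ)+1)/(n:ℝ), s) - G ((k:ℝ)/(n:ℝ), s)‖ < ‖G ((k:ℝ)/(n:ℝ), s)‖ := by
    intro k hk s hs
    have hk1 : ((k:ℝ)+1) ≤ (n:ℝ) := by exact_mod_cast Nat.succ_le_of_lt hk
    have h1 := hmemK ((k:ℝ)+1) (by positivity) hk1 s hs
    have h2 := hmemK (k:ℝ) (by positivity) (by linarith) s hs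
    have hdist : dist ((((k:ℝ)+1))/(n:ℝ), s) (((k:ℝ)/(n:ℝ), s) : ℝ × ℝ) < δ := by
      rw [Prod.dist_eq, dist_self, Real.dist_eq]
      have he : ((k:ℝ)+1)/(n:ℝ) - (k:ℝ)/(n:ℝ) = 1/(n:ℝ) := by field_simp; ring
      rw [he, abs_of_pos (by positivity)]
      rw [max_eq_left (by positivity)]
      exact hδn
    have hlt := hδ' _ h1 _ h2 hdist
    rw [dist_eq_norm] at hlt
    exact lt_of_lt_of_le hlt (hp₀ _ h2)
  have hslit : ∀ (k : ℕ), k < n → ∀ s ∈ Set.Icc (0:ℝ) 1,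
      G (((k:ℝ)+1)/(n:ℝ), s) / G ((k:ℝ)/(n:ℝ), s) ∈ Complex.slitPlane :=
    fun k hk s hs => slit_of_close (hG0 _) (hclose k hk s hs)
  set W : ℝ → ℂ := fun s => ∑ k ∈ Finset.range n,
      Complex.log (G (((k:ℝ)+1)/(n:ℝ), s) / G ((k:ℝ)/(n:ℝ), s)) with hWdef
  have hWcont : ContinuousOn W (Set.Icc (0:ℝ) 1) := by
    apply continuousOn_finset_sum
    intro k hk s hs
    apply ContinuousAt.continuousWithinAt
    have hq : ContinuousAt (fun s : ℝ => G (((k:ℝ)+1)/(n:ℝ), s) / G ((k:ℝ)/(n:ℝ), s)) s := by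
      apply ContinuousAt.div
      · exact (hGc.comp (continuous_const.prodMk continuous_id)).continuousAt
      · exact (hGc.comp (continuous_const.prodMk continuous_id)).continuousAt
      · exact hG0 _
    exact hq.clog (hslit k (Finset.mem_range.mp hk) s hs)
  have hWim : ∀ s ∈ Set.Icc (0:ℝ) 1, ∃ m : ℤ, (W s).im = (m:ℝ) * (2 * π) := by
    intro s hs
    have hexp : Complex.exp (W s) = 1 := by
      show Complex.exp (∑ k ∈ Finset.range n,
        Complex.log (G (((k:ℝ)+1)/(n:ℝ), s) / G ((k:ℝ)/(n:ℝ), s))) = 1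
      rw [Complex.exp_sum]
      have h1 : ∀ k ∈ Finset.range n,
          Complex.exp (Complex.log (G (((k:ℝ)+1)/(n:ℝ), s) / G ((k:ℝ)/(n:ℝ), s)))
            = (fun k : ℕ => G ((k:ℝ)/(n:ℝ), s)) (k+1) / (fun k : ℕ => G ((k:ℝ)/(n:ℝ), s)) k := by
        intro k _
        rw [Complex.exp_log (div_ne_zero (hG0 _) (hG0 _))]
        push_cast
        ring_nf
      rw [Finset.prod_congr rfl h1,
        prod_div_telescope (fun k : ℕ => G ((k:ℝ)/(n:ℝ), s)) (fun k => hG0 _) n]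
      show G (((n:ℕ):ℝ)/(n:ℝ), s) / G (((0:ℕ):ℝ)/(n:ℝ), s) = 1
      rw [show (((n:ℕ):ℝ)/(n:ℝ) : ℝ) = 1 by field_simp, show (((0:ℕ):ℝ)/(n:ℝ) : ℝ) = 0 by simp]
      rw [hside s, div_self (hG0 _)]
    obtain ⟨m, hm⟩ := Complex.exp_eq_one_iff.mp hexp
    refine ⟨m, ?_⟩
    rw [hm]
    simp [Complex.mul_im]
  have hW1 : W 1 = 0 := by
    show (∑ k ∈ Finset.range n,
      Complex.log (G (((k:ℝ)+1)/(n:ℝ), 1) / G ((k:ℝ)/(n:ℝ), 1))) = 0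
    apply Finset.sum_eq_zero
    intro k _
    rw [htop, htop, div_self (h0 np), Complex.log_one]
  have hπ := Real.pi_pos
  have hW0 : W 0 = -(2 * (π:ℂ) * I) := by
    show (∑ k ∈ Finset.range n,
      Complex.log (G (((k:ℝ)+1)/(n:ℝ), 0) / G ((k:ℝ)/(n:ℝ), 0))) = -(2 * (π:ℂ) * I)
    have hterm : ∀ k ∈ Finset.range n,
        Complex.log (G (((k:ℝ)+1)/(n:ℝ), 0) / G ((k:ℝ)/(n:ℝ), 0))
          = -(((2 * π / (n:ℝ) : ℝ) : ℂ) * I) := by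
      intro k _
      rw [hbase, hbase, mul_div_mul_right _ _ (h0 e₀), ← map_div₀ (starRingEnd ℂ),
        ← Complex.exp_sub]
      have harg : ((2 * π * (((k:ℝ)+1)/(n:ℝ)) : ℝ) : ℂ) * I - ((2 * π * ((k:ℝ)/(n:ℝ)) : ℝ) : ℂ) * I
          = ((2 * π / (n:ℝ) : ℝ) : ℂ) * I := by
        rw [← sub_mul, ← Complex.ofReal_sub]
        congr 2
        field_simp
        ring
      rw [harg, ← Complex.exp_conj]
      have hconj : (starRingEnd ℂ) (((2 * π / (n:ℝ) : ℝ) : ℂ) * I)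
          = -(((2 * π / (n:ℝ) : ℝ) : ℂ) * I) := by
        rw [map_mul, Complex.conj_ofReal, Complex.conj_I]
        ring
      rw [hconj]
      have him : (-(((2 * π / (n:ℝ) : ℝ) : ℂ) * I)).im = -(2 * π / (n:ℝ)) := by
        simp
      have hsmall : 2 * π / (n:ℝ) < π := by
        rw [div_lt_iff₀ hn0]
        nlinarith
      have h2n : 0 < 2 * π / (n:ℝ) := by positivity
      have hcond1 : -π < (-(((2 * π / (n:ℝ) : ℝ) : ℂ) * I)).im := by rw [him]; linarith
      have hcond2 : (-(((2 * π / (n:ℝ) : ℝ) : ℂ) * I)).im ≤ π := by rw [him]; linarith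
      rw [Complex.log_exp hcond1 hcond2]
    rw [Finset.sum_congr rfl hterm, Finset.sum_const, Finset.card_range, nsmul_eq_mul]
    have hnc : ((n:ℕ):ℂ) ≠ 0 := by exact_mod_cast hnne
    push_cast
    field_simp
  have hφcont : ContinuousOn (fun s => (W s).im) (Set.Icc (0:ℝ) 1) :=
    Complex.continuous_im.comp_continuousOn hWcont
  have hIVT := intermediate_value_Icc (by norm_num : (0:ℝ) ≤ 1) hφcont
  have hmem : -π ∈ Set.Icc ((W 0).im) ((W 1).im) := by
    rw [hW0, hW1]
    constructor
    · simp only [Complex.neg_im]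
      have : (2 * (π:ℂ) * I).im = 2 * π := by simp
      rw [this]
      linarith
    · simp only [Complex.zero_im]
      linarith
  obtain ⟨s, hs, hφs⟩ := hIVT hmem
  obtain ⟨m, hm⟩ := hWim s hs
  rw [show (W s).im = -π from hφs] at hm
  have h3 : (2*(m:ℝ) + 1) = 0 := by
    rcases mul_eq_zero.mp (show (2*(m:ℝ) + 1) * π = 0 by linarith) with h | h
    · exact h
    · exact absurd h (ne_of_gt hπ)
  have h4 : (2*m + 1 : ℤ) = 0 := by exact_mod_cast h3
  omega

private def ppEntryLM : M₂ →ₗ[ℂ] ℂ where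
  toFun m := m 0 1
  map_add' _ _ := rfl
  map_smul' _ _ := rfl

private def ppConsLM : (ℂ × ℂ) →ₗ[ℂ] M₂ where
  toFun p := !![0, p.1; p.2, 0]
  map_add' p q := by
    ext i j
    fin_cases i <;> fin_cases j <;> simp
  map_smul' c p := by
    ext i j
    fin_cases i <;> fin_cases j <;> simp

open Complex in
private lemma pp_not_star_comm :
    ¬ ∃ a : C(PPSphere 1, M₂), a ∈ ppSet 1 ∧
        a * star a - star a * a = ppP 1 - ppQ 1 := by
  rintro ⟨a, ha, haeq⟩
  have hpt : ∀ e : PPSphere 1,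
      a e * star (a e) - star (a e) * a e
        = Matrix.diagonal ![1, 0] - Matrix.diagonal ![0, 1] := by
    intro e
    have h := ContinuousMap.congr_fun haeq e
    simpa [ContinuousMap.sub_apply, ContinuousMap.mul_apply, ContinuousMap.star_apply,
      ppP, ppQ] using h
  have hgc : Continuous (fun e : PPSphere 1 => a e 0 1) :=
    ppEntryLM.continuous_of_finiteDimensional.comp a.continuous
  have h0 : ∀ e : PPSphere 1, a e 0 1 ≠ 0 := by
    intro e hge
    have h00 := congrFun (congrFun (hpt e) 0) 0
    simp only [Matrix.sub_apply, Matrix.mul_apply, Fin.sum_univ_two, Matrix.star_apply,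
      Matrix.diagonal_apply_eq, hge] at h00
    rw [show (![(1:ℂ), 0] : Fin 2 → ℂ) 0 = 1 from rfl,
      show (![(0:ℂ), 1] : Fin 2 → ℂ) 0 = 0 from rfl] at h00
    have hy : a e 1 0 * (starRingEnd ℂ) (a e 1 0) = -1 := by
      simp only [Complex.star_def] at h00
      linear_combination -h00
    rw [Complex.mul_conj] at hy
    have h1 : Complex.normSq (a e 1 0) = -1 := by exact_mod_cast hy
    linarith [Complex.normSq_nonneg (a e 1 0)]
  have heqg : ∀ (e : PPSphere 1) (l : ℂ) (hl : ‖l‖ = 1),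
      (fun e : PPSphere 1 => a e 0 1) (circleSMul l hl e)
        = (starRingEnd ℂ l) * (fun e : PPSphere 1 => a e 0 1) e := by
    intro e l hl
    have h01 := congrFun (congrFun (ha e l hl) 0) 1
    simp only [ppDiag, Matrix.mul_diagonal, Matrix.diagonal_mul, Matrix.cons_val_zero,
      Matrix.cons_val_one, Matrix.head_cons] at h01
    show a (circleSMul l hl e) 0 1 = (starRingEnd ℂ) l * a e 0 1
    rw [h01]
    ring
  exact pp_no_equivariant _ hgc h0 heqg
open Complex in
private def ppXfun (e : PPSphere 1) : M₂ :=
  !![0, (starRingEnd ℂ) ((e : EuclideanSpace ℂ (Fin 2)) 0);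
     (e : EuclideanSpace ℂ (Fin 2)) 1, 0]

open Complex in
private def ppYfun (e : PPSphere 1) : M₂ :=
  !![0, -(starRingEnd ℂ) ((e : EuclideanSpace ℂ (Fin 2)) 1);
     (e : EuclideanSpace ℂ (Fin 2)) 0, 0]

private lemma ppXcont : Continuous ppXfun := by
  show Continuous fun e : PPSphere 1 =>
    ppConsLM ((starRingEnd ℂ) ((e : EuclideanSpace ℂ (Fin 2)) 0),
      (e : EuclideanSpace ℂ (Fin 2)) 1)
  exact ppConsLM.continuous_of_finiteDimensional.comp
    ((Complex.continuous_conj.comp ((PiLp.continuous_apply (p := 2) (β := fun _ : Fin 2 => ℂ) (0 : Fin 2)).comp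
        continuous_subtype_val)).prodMk
      ((PiLp.continuous_apply (p := 2) (β := fun _ : Fin 2 => ℂ) (1 : Fin 2)).comp continuous_subtype_val))

private lemma ppYcont : Continuous ppYfun := by
  show Continuous fun e : PPSphere 1 =>
    ppConsLM (-(starRingEnd ℂ) ((e : EuclideanSpace ℂ (Fin 2)) 1),
      (e : EuclideanSpace ℂ (Fin 2)) 0)
  exact ppConsLM.continuous_of_finiteDimensional.comp
    (((Complex.continuous_conj.comp ((PiLp.continuous_apply (p := 2) (β := fun _ : Fin 2 => ℂ) (1 : Fin 2)).comp
        continuous_subtype_val)).neg).prodMk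
      ((PiLp.continuous_apply (p := 2) (β := fun _ : Fin 2 => ℂ) (0 : Fin 2)).comp continuous_subtype_val))

private lemma pp_smul_apply {l : ℂ} {hl : ‖l‖ = 1} (e : PPSphere 1) (i : Fin 2) :
    ((circleSMul l hl e : PPSphere 1) : EuclideanSpace ℂ (Fin 2)) i
      = l * (e : EuclideanSpace ℂ (Fin 2)) i := rfl

open Complex in
private lemma ppX_mem : (⟨ppXfun, ppXcont⟩ : C(PPSphere 1, M₂)) ∈ ppSet 1 := by
  intro e l hl
  show ppXfun (circleSMul l hl e) = ppDiag l * ppXfun e * ppDiag ((starRingEnd ℂ) l)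
  ext i j
  fin_cases i <;> fin_cases j <;>
    simp [ppXfun, ppDiag, Matrix.mul_diagonal, Matrix.diagonal_mul, pp_smul_apply,
      map_mul] <;> ring

open Complex in
private lemma ppY_mem : (⟨ppYfun, ppYcont⟩ : C(PPSphere 1, M₂)) ∈ ppSet 1 := by
  intro e l hl
  show ppYfun (circleSMul l hl e) = ppDiag l * ppYfun e * ppDiag ((starRingEnd ℂ) l)
  ext i j
  fin_cases i <;> fin_cases j <;>
    simp [ppYfun, ppDiag, Matrix.mul_diagonal, Matrix.diagonal_mul, pp_smul_apply,
      map_mul] <;> ring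

open Complex in
private lemma pp_comm_exists :
    ∃ X Y : C(PPSphere 1, M₂), X ∈ ppSet 1 ∧ Y ∈ ppSet 1 ∧
      X * Y - Y * X = ppP 1 - ppQ 1 := by
  refine ⟨⟨ppXfun, ppXcont⟩, ⟨ppYfun, ppYcont⟩, ppX_mem, ppY_mem, ?_⟩
  apply ContinuousMap.ext
  intro e
  have he : ‖(e : EuclideanSpace ℂ (Fin 2))‖ = 1 := by
    simpa using mem_sphere_zero_iff_norm.mp e.2
  have h2 : ‖(e : EuclideanSpace ℂ (Fin 2)) 0‖^2 + ‖(e : EuclideanSpace ℂ (Fin 2)) 1‖^2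
      = 1 := by
    rw [EuclideanSpace.norm_eq, Fin.sum_univ_two] at he
    exact Real.sqrt_eq_one.mp he
  have hc : ∀ z : ℂ, (starRingEnd ℂ) z * z = ((‖z‖^2 : ℝ) : ℂ) := by
    intro z
    rw [mul_comm, Complex.mul_conj, Complex.normSq_eq_norm_sq]
  have hzw : (starRingEnd ℂ) ((e : EuclideanSpace ℂ (Fin 2)) 0)
        * (e : EuclideanSpace ℂ (Fin 2)) 0
      + (starRingEnd ℂ) ((e : EuclideanSpace ℂ (Fin 2)) 1)
        * (e : EuclideanSpace ℂ (Fin 2)) 1 = 1 := by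
    rw [hc, hc, ← Complex.ofReal_add, h2, Complex.ofReal_one]
  show ppXfun e * ppYfun e - ppYfun e * ppXfun e
    = Matrix.diagonal ![1, 0] - Matrix.diagonal ![0, 1]
  ext i j
  fin_cases i <;> fin_cases j <;>
    simp [ppXfun, ppYfun, Matrix.mul_apply, Fin.sum_univ_two, Matrix.diagonal] <;>
    first
      | linear_combination hzw
      | linear_combination -hzw

private lemma ppDiag_star (c : ℂ) : star (ppDiag c) = ppDiag ((starRingEnd ℂ) c) := by
  rw [ppDiag, ppDiag, Matrix.star_eq_conjTranspose, Matrix.diagonal_conjTranspose]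
  have h : star (![(1:ℂ), c]) = ![1, (starRingEnd ℂ) c] := by
    funext i
    fin_cases i <;> simp [Complex.star_def]
  rw [h]

private lemma ppSet_star {a : C(PPSphere 1, M₂)} (ha : a ∈ ppSet 1) : star a ∈ ppSet 1 := by
  intro e l hl
  show star (a (circleSMul l hl e)) = ppDiag l * (star a) e * ppDiag ((starRingEnd ℂ) l)
  rw [ContinuousMap.star_apply, ha e l hl, star_mul, star_mul, ppDiag_star, ppDiag_star,
    starRingEnd_self_apply, mul_assoc]
/-- **Statement 15.** In `𝔓₁`, the element `P₁ − Q₁` is a self-adjoint commutator but not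
a *-commutator; in particular the set `𝔠*(𝔓₁)` of *-commutators is a proper subset of the
set `𝔠(𝔓₁)_sa` of self-adjoint commutators. -/
theorem selfAdjoint_commutator_not_star_commutator_in_PP_one :
    (∃ X Y : C(PPSphere 1, M₂), X ∈ ppSet 1 ∧ Y ∈ ppSet 1 ∧
        X * Y - Y * X = ppP 1 - ppQ 1) ∧
    (¬ ∃ a : C(PPSphere 1, M₂), a ∈ ppSet 1 ∧
        a * star a - star a * a = ppP 1 - ppQ 1) ∧
    {T : C(PPSphere 1, M₂) | ∃ a ∈ ppSet 1, T = a * star a - star a * a} ⊂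
      {T : C(PPSphere 1, M₂) |
        (∃ a ∈ ppSet 1, ∃ b ∈ ppSet 1, T = a * b - b * a) ∧ star T = T} := by
  obtain ⟨X, Y, hX, hY, hXY⟩ := pp_comm_exists
  refine ⟨⟨X, Y, hX, hY, hXY⟩, pp_not_star_comm, ?_⟩
  rw [Set.ssubset_def]
  constructor
  · rintro T ⟨a, ha, rfl⟩
    refine ⟨⟨a, ha, star a, ppSet_star ha, rfl⟩, ?_⟩
    simp [star_sub, star_mul, star_star]
  · intro hsub
    have hstarPQ : star (ppP 1 - ppQ 1) = ppP 1 - ppQ 1 := by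
      have h1 : star (![(1:ℂ), 0]) = ![1, 0] := by
        funext i; fin_cases i <;> simp
      have h2 : star (![(0:ℂ), 1]) = ![0, 1] := by
        funext i; fin_cases i <;> simp
      apply ContinuousMap.ext
      intro e
      simp [ppP, ppQ, ContinuousMap.star_apply, ContinuousMap.sub_apply, star_sub,
        Matrix.star_eq_conjTranspose, Matrix.diagonal_conjTranspose, h1, h2]
    have hPQ : (ppP 1 - ppQ 1) ∈ {T : C(PPSphere 1, M₂) |
        (∃ a ∈ ppSet 1, ∃ b ∈ ppSet 1, T = a * b - b * a) ∧ star T = T} :=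
      ⟨⟨X, hX, Y, hY, hXY.symm⟩, hstarPQ⟩
    obtain ⟨b, hb, hbeq⟩ := hsub hPQ
    exact pp_not_star_comm ⟨b, hb, hbeq.symm⟩
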